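/- arXiv:1604.07100 — 3 statements merged into one kernel-verified Lean document; each statement's English description precedes it below -/
import Mathlib

section
/- Let G be a graph and let G^s be the graph obtained from G by subdividing every edge exactly twice (replacing each edge by a path with two new internal vertices). Then G has a vertex cover of size k if and only if G^s has a vertex cover of size |E(G)| + k. -/
/-- `C` is a vertex cover of `G`: every edge has at least one endpoint in `C`. -/
def IsVertexCover {V : Type} (G : SimpleGraph V) (C : Set V) : Prop :=
  ∀ ⦃u v : V⦄, G.Adj u v → u ∈ C ∨ v ∈ C

/-- Vertex type of the graph obtained from a graph on `V` by subdividing every edge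
twice: original vertices, plus for each edge `e` and endpoint `u ∈ e` a new
subdivision vertex `(e, u)` attached next to `u`. -/
abbrev SubdivVert (V : Type) := V ⊕ (Sym2 V × V)

/-- The graph obtained from `G` by subdividing every edge exactly twice:
each edge `{u,v}` is replaced by the path `u - (e,u) - (e,v) - v`. -/
def subdivTwice {V : Type} (G : SimpleGraph V) : SimpleGraph (SubdivVert V) where
  Adj x y :=
    (∃ u e, x = Sum.inl u ∧ y = Sum.inr (e, u) ∧ e ∈ G.edgeSet ∧ u ∈ e) ∨
    (∃ u e, y = Sum.inl u ∧ x = Sum.inr (e, u) ∧ e ∈ G.edgeSet ∧ u ∈ e) ∨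
    (∃ e u v, x = Sum.inr (e, u) ∧ y = Sum.inr (e, v) ∧
      e ∈ G.edgeSet ∧ u ∈ e ∧ v ∈ e ∧ u ≠ v)
  symm := by
    constructor
    rintro x y (h | h | ⟨e, u, v, hx, hy, he, hu, hv, huv⟩)
    · exact Or.inr (Or.inl h)
    · exact Or.inl h
    · exact Or.inr (Or.inr ⟨e, v, u, hy, hx, he, hv, hu, huv.symm⟩)
  loopless := by
    constructor
    rintro x (⟨u, e, hx, hy, _, _⟩ | ⟨u, e, hy, hx, _, _⟩ |
      ⟨e, u, v, hx, hy, _, _, _, huv⟩)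
    · rw [hx] at hy; simp at hy
    · rw [hy] at hx; simp at hx
    · rw [hx] at hy; simp only [Sum.inr.injEq, Prod.mk.injEq] at hy
      exact huv hy.2

/-- `G` has a vertex cover of size `k` iff the twice-subdivided graph `G^s`
has a vertex cover of size `|E(G)| + k`. -/
theorem vertexCover_iff_subdivTwice {V : Type} [Fintype V] [DecidableEq V]
    (G : SimpleGraph V) [DecidableRel G.Adj] (k : ℕ) :
    (∃ C : Finset V, IsVertexCover G ↑C ∧ C.card ≤ k) ↔
    (∃ C' : Finset (SubdivVert V), IsVertexCover (subdivTwice G) ↑C' ∧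
      C'.card ≤ G.edgeFinset.card + k) := by

  classical
  have sym2_out : ∀ e : Sym2 V, s(e.out.1, e.out.2) = e := by
    intro e; conv_rhs => rw [← e.out_eq]
  constructor
  · rintro ⟨C, hC, hcard⟩
    set pick : Sym2 V → V := fun e => if e.out.1 ∈ C then e.out.2 else e.out.1 with hpickdef
    have hpick_mem : ∀ e : Sym2 V, pick e ∈ e := by
      intro e
      by_cases h : e.out.1 ∈ C <;>
        simp [hpickdef, h, Sym2.out_fst_mem, Sym2.out_snd_mem]
    have hpick_eq : ∀ e ∈ G.edgeSet, ∀ u ∈ e, u ∉ C → pick e = u := by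
      intro e he u hu huC
      have hadj : G.Adj e.out.1 e.out.2 := by
        rw [← SimpleGraph.mem_edgeSet, sym2_out]; exact he
      have hcov := hC hadj
      rw [← sym2_out e, Sym2.mem_iff] at hu
      rcases hu with rfl | rfl
      · simp [hpickdef, huC]
      · rcases hcov with h1 | h1
        · simp [hpickdef, Finset.mem_coe.mp h1]
        · exact absurd (Finset.mem_coe.mp h1) huC
    refine ⟨C.image Sum.inl ∪ G.edgeFinset.image (fun e => Sum.inr (e, pick e)), ?_, ?_⟩
    · rintro x y (⟨u, e, rfl, rfl, he, hu⟩ | ⟨u, e, rfl, rfl, he, hu⟩ |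
        ⟨e, u, v, rfl, rfl, he, hu, hv, huv⟩)
      · by_cases h : u ∈ C
        · exact Or.inl (by simp [h])
        · refine Or.inr ?_
          have := hpick_eq e he u hu h
          simp only [Finset.coe_union, Set.mem_union, Finset.coe_image, Set.mem_image]
          exact Or.inr ⟨e, Finset.mem_coe.mpr (SimpleGraph.mem_edgeFinset.mpr he), by rw [this]⟩
      · by_cases h : u ∈ C
        · exact Or.inr (by simp [h])
        · refine Or.inl ?_
          have := hpick_eq e he u hu h
          simp only [Finset.coe_union, Set.mem_union, Finset.coe_image, Set.mem_image]
          exact Or.inr ⟨e, Finset.mem_coe.mpr (SimpleGraph.mem_edgeFinset.mpr he), by rw [this]⟩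
      · have hp := hpick_mem e
        have heq : e = s(u, v) := (Sym2.mem_and_mem_iff huv).mp ⟨hu, hv⟩
        rw [heq, Sym2.mem_iff] at hp
        rcases hp with hp | hp
        · refine Or.inl ?_
          simp only [Finset.coe_union, Set.mem_union, Finset.coe_image, Set.mem_image]
          exact Or.inr ⟨e, Finset.mem_coe.mpr (SimpleGraph.mem_edgeFinset.mpr he), by rw [heq, hp]⟩
        · refine Or.inr ?_
          simp only [Finset.coe_union, Set.mem_union, Finset.coe_image, Set.mem_image]
          exact Or.inr ⟨e, Finset.mem_coe.mpr (SimpleGraph.mem_edgeFinset.mpr he), by rw [heq, hp]⟩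
    · calc (C.image Sum.inl ∪ G.edgeFinset.image (fun e => Sum.inr (e, pick e))).card
          ≤ (C.image Sum.inl).card + (G.edgeFinset.image (fun e => Sum.inr (e, pick e))).card :=
            Finset.card_union_le _ _
        _ ≤ C.card + G.edgeFinset.card := by
            gcongr <;> exact Finset.card_image_le
        _ ≤ G.edgeFinset.card + k := by omega
  · rintro ⟨C', hC', hcard⟩
    set C0 : Finset V := Finset.univ.filter (fun u => Sum.inl u ∈ C') with hC0def
    set Bad : Finset (Sym2 V) :=
      G.edgeFinset.filter (fun e => ∀ u, u ∈ e → Sum.inl u ∉ C') with hBaddef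
    -- middle edge forces a subdivision vertex
    have hmiddle : ∀ e ∈ G.edgeFinset, ∃ u, u ∈ e ∧ Sum.inr (e, u) ∈ C' := by
      intro e he
      rw [SimpleGraph.mem_edgeFinset] at he
      have hadj : G.Adj e.out.1 e.out.2 := by
        rw [← SimpleGraph.mem_edgeSet, sym2_out]; exact he
      have hne : e.out.1 ≠ e.out.2 := hadj.ne
      have hadj' : (subdivTwice G).Adj (Sum.inr (e, e.out.1)) (Sum.inr (e, e.out.2)) :=
        Or.inr (Or.inr ⟨e, e.out.1, e.out.2, rfl, rfl, he,
          Sym2.out_fst_mem e, Sym2.out_snd_mem e, hne⟩)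
      rcases hC' hadj' with h | h
      · exact ⟨e.out.1, Sym2.out_fst_mem e, h⟩
      · exact ⟨e.out.2, Sym2.out_snd_mem e, h⟩
    have hbad : ∀ e ∈ Bad, ∀ u, u ∈ e → Sum.inr (e, u) ∈ C' := by
      intro e he u hu
      rw [hBaddef, Finset.mem_filter] at he
      obtain ⟨heE, hno⟩ := he
      rw [SimpleGraph.mem_edgeFinset] at heE
      have hadj' : (subdivTwice G).Adj (Sum.inl u) (Sum.inr (e, u)) :=
        Or.inl ⟨u, e, rfl, rfl, heE, hu⟩
      rcases hC' hadj' with h | h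
      · exact absurd h (hno u hu)
      · exact h
    set g : Sym2 V → Finset (SubdivVert V) :=
      fun e => C'.filter (fun x => ∃ u, x = Sum.inr (e, u)) with hgdef
    have hg_disj : ∀ e ∈ G.edgeFinset, ∀ e' ∈ G.edgeFinset, e ≠ e' →
        Disjoint (g e) (g e') := by
      intro e _ e' _ hne
      rw [Finset.disjoint_left]
      rintro x hx hx'
      rw [hgdef, Finset.mem_filter] at hx hx'
      obtain ⟨-, u, rfl⟩ := hx
      obtain ⟨-, u', hx'⟩ := hx'
      simp only [Sum.inr.injEq, Prod.mk.injEq] at hx'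
      exact hne hx'.1
    have hg_card : ∀ e ∈ G.edgeFinset, 1 ≤ (g e).card := by
      intro e he
      obtain ⟨u, _, hu⟩ := hmiddle e he
      exact Finset.card_pos.mpr ⟨Sum.inr (e, u), by
        rw [hgdef]; exact Finset.mem_filter.mpr ⟨hu, u, rfl⟩⟩
    have hg_card2 : ∀ e ∈ Bad, 2 ≤ (g e).card := by
      intro e he
      have heE : e ∈ G.edgeFinset := (Finset.mem_filter.mp he).1
      rw [SimpleGraph.mem_edgeFinset] at heE
      have hadj : G.Adj e.out.1 e.out.2 := by
        rw [← SimpleGraph.mem_edgeSet, sym2_out]; exact heE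
      refine Finset.one_lt_card.mpr ⟨Sum.inr (e, e.out.1), ?_, Sum.inr (e, e.out.2), ?_, ?_⟩
      · rw [hgdef]
        exact Finset.mem_filter.mpr ⟨hbad e he _ (Sym2.out_fst_mem e), _, rfl⟩
      · rw [hgdef]
        exact Finset.mem_filter.mpr ⟨hbad e he _ (Sym2.out_snd_mem e), _, rfl⟩
      · simp only [ne_eq, Sum.inr.injEq, Prod.mk.injEq]
        exact fun h => hadj.ne h.2
    -- the big union of subdivision vertices used
    have hbu_card : G.edgeFinset.card + Bad.card ≤ (G.edgeFinset.biUnion g).card := by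
      rw [Finset.card_biUnion hg_disj]
      have hsplit := Finset.sum_filter_add_sum_filter_not G.edgeFinset
        (fun e => ∀ u, u ∈ e → Sum.inl u ∉ C') (fun e => (g e).card)
      have h1 : 2 * Bad.card ≤ ∑ e ∈ Bad, (g e).card := by
        calc 2 * Bad.card = ∑ _e ∈ Bad, 2 := by rw [Finset.sum_const]; ring
          _ ≤ ∑ e ∈ Bad, (g e).card := Finset.sum_le_sum hg_card2
      have h2 : (G.edgeFinset.filter (fun e => ¬ ∀ u, u ∈ e → Sum.inl u ∉ C')).card ≤
          ∑ e ∈ G.edgeFinset.filter (fun e => ¬ ∀ u, u ∈ e → Sum.inl u ∉ C'), (g e).card := by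
        calc (G.edgeFinset.filter (fun e => ¬ ∀ u, u ∈ e → Sum.inl u ∉ C')).card
            = ∑ _e ∈ G.edgeFinset.filter (fun e => ¬ ∀ u, u ∈ e → Sum.inl u ∉ C'), 1 := by
              rw [Finset.sum_const]; ring
          _ ≤ _ := Finset.sum_le_sum (fun e he => hg_card e (Finset.mem_filter.mp he).1)
      have hpart : Bad.card +
          (G.edgeFinset.filter (fun e => ¬ ∀ u, u ∈ e → Sum.inl u ∉ C')).card =
          G.edgeFinset.card := by
        rw [hBaddef]
        exact Finset.card_filter_add_card_filter_not _
      rw [← hsplit, ← hBaddef]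
      omega
    -- C0 and the biUnion are disjoint subsets of C'
    have hkey : C0.card + (G.edgeFinset.card + Bad.card) ≤ C'.card := by
      have hsub : C0.image Sum.inl ∪ G.edgeFinset.biUnion g ⊆ C' := by
        rw [Finset.union_subset_iff]
        constructor
        · intro x hx
          obtain ⟨u, hu, rfl⟩ := Finset.mem_image.mp hx
          exact (Finset.mem_filter.mp hu).2
        · intro x hx
          obtain ⟨e, -, hx⟩ := Finset.mem_biUnion.mp hx
          exact (Finset.mem_filter.mp hx).1
      have hdisj : Disjoint (C0.image Sum.inl) (G.edgeFinset.biUnion g) := by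
        rw [Finset.disjoint_left]
        rintro x hx hx'
        obtain ⟨u, -, rfl⟩ := Finset.mem_image.mp hx
        obtain ⟨e, -, hx'⟩ := Finset.mem_biUnion.mp hx'
        obtain ⟨-, u', h⟩ := Finset.mem_filter.mp hx'
        exact absurd h (by simp)
      calc C0.card + (G.edgeFinset.card + Bad.card)
          ≤ (C0.image Sum.inl).card + (G.edgeFinset.biUnion g).card := by
            rw [Finset.card_image_of_injective _ Sum.inl_injective]
            omega
        _ = (C0.image Sum.inl ∪ G.edgeFinset.biUnion g).card :=
            (Finset.card_union_of_disjoint hdisj).symm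
        _ ≤ C'.card := Finset.card_le_card hsub
    refine ⟨C0 ∪ Bad.image (fun e => e.out.1), ?_, ?_⟩
    · intro u v hadj
      by_cases hu : Sum.inl u ∈ C'
      · exact Or.inl (by
          simp only [Finset.coe_union, Set.mem_union, Finset.mem_coe]
          exact Or.inl (Finset.mem_filter.mpr ⟨Finset.mem_univ _, hu⟩))
      by_cases hv : Sum.inl v ∈ C'
      · exact Or.inr (by
          simp only [Finset.coe_union, Set.mem_union, Finset.mem_coe]
          exact Or.inl (Finset.mem_filter.mpr ⟨Finset.mem_univ _, hv⟩))
      have heB : s(u, v) ∈ Bad := by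
        rw [hBaddef, Finset.mem_filter]
        refine ⟨SimpleGraph.mem_edgeFinset.mpr hadj, ?_⟩
        intro w hw
        rw [Sym2.mem_iff] at hw
        rcases hw with rfl | rfl
        · exact hu
        · exact hv
      have hout : (s(u, v) : Sym2 V).out.1 ∈ (s(u, v) : Sym2 V) := Sym2.out_fst_mem _
      rw [Sym2.mem_iff] at hout
      have hmem : (s(u, v) : Sym2 V).out.1 ∈ Bad.image (fun e => e.out.1) :=
        Finset.mem_image.mpr ⟨_, heB, rfl⟩
      rcases hout with h | h
      · exact Or.inl (by
          simp only [Finset.coe_union, Set.mem_union, Finset.mem_coe]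
          exact Or.inr (h ▸ hmem))
      · exact Or.inr (by
          simp only [Finset.coe_union, Set.mem_union, Finset.mem_coe]
          exact Or.inr (h ▸ hmem))
    · have h1 : (C0 ∪ Bad.image (fun e => e.out.1)).card ≤ C0.card + Bad.card :=
        le_trans (Finset.card_union_le _ _) (by
          have := Finset.card_image_le (s := Bad) (f := fun e : Sym2 V => e.out.1)
          omega)
      omega
end

section
/- If the graph G^s obtained from a finite simple graph G by subdividing every edge exactly twice has a vertex cover of size m, then G has a vertex cover of size at most m - |E(G)|. -/
/-- If the twice-subdivided graph `G^s` has a vertex cover of size `m`, then `G`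
has a vertex cover of size at most `m - |E(G)|`. -/
theorem vertexCover_of_subdivTwice_vertexCover {V : Type} [Fintype V] [DecidableEq V]
    (G : SimpleGraph V) [DecidableRel G.Adj] (m : ℕ)
    (h : ∃ C' : Finset (SubdivVert V), IsVertexCover (subdivTwice G) ↑C' ∧ C'.card = m) :
    ∃ C : Finset V, IsVertexCover G ↑C ∧ C.card ≤ m - G.edgeFinset.card := by
  classical
  obtain ⟨C', hC', hcard⟩ := h
  set A : Finset V := Finset.univ.filter (fun u => Sum.inl u ∈ C') with hA
  set B : Finset (Sym2 V × V) := Finset.univ.filter (fun p => Sum.inr p ∈ C') with hB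
  set S : Finset (Sym2 V) :=
    G.edgeFinset.filter (fun e => ∀ u, u ∈ e → Sum.inl u ∉ C') with hS
  set C : Finset V := A ∪ S.image (fun e => e.out.1) with hC
  refine ⟨C, ?_, ?_⟩
  · -- cover
    intro u v huv
    by_cases hu : Sum.inl u ∈ C'
    · exact Or.inl (by simp [hC, hA, hu])
    by_cases hv : Sum.inl v ∈ C'
    · exact Or.inr (by simp [hC, hA, hv])
    have heS : s(u, v) ∈ S := by
      rw [hS, Finset.mem_filter]
      refine ⟨SimpleGraph.mem_edgeFinset.2 huv, fun w hw => ?_⟩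
      rcases Sym2.mem_iff.1 hw with rfl | rfl
      · exact hu
      · exact hv
    have hmem : (s(u, v) : Sym2 V).out.1 ∈ (s(u, v) : Sym2 V) := Sym2.out_fst_mem _
    rcases Sym2.mem_iff.1 hmem with heq | heq
    · exact Or.inl (by
        simp only [hC, Finset.coe_union, Set.mem_union]
        exact Or.inr (by
          rw [← heq]
          exact Finset.mem_coe.2 (Finset.mem_image_of_mem _ heS)))
    · exact Or.inr (by
        simp only [hC, Finset.coe_union, Set.mem_union]
        exact Or.inr (by
          rw [← heq]
          exact Finset.mem_coe.2 (Finset.mem_image_of_mem _ heS)))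
  · -- cardinality
    have hAB : A.card + B.card ≤ m := by
      have hsub : A.image Sum.inl ∪ B.image Sum.inr ⊆ C' := by
        intro x hx
        rcases Finset.mem_union.1 hx with hx | hx
        · obtain ⟨a, ha, rfl⟩ := Finset.mem_image.1 hx
          exact (Finset.mem_filter.1 ha).2
        · obtain ⟨a, ha, rfl⟩ := Finset.mem_image.1 hx
          exact (Finset.mem_filter.1 ha).2
      have hdisj : Disjoint (A.image Sum.inl) (B.image Sum.inr) := by
        simp only [Finset.disjoint_left, Finset.mem_image]
        rintro x ⟨a, -, rfl⟩ ⟨b, -, hb⟩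
        exact Sum.inl_ne_inr hb.symm
      calc A.card + B.card
          = (A.image Sum.inl).card + (B.image Sum.inr).card := by
            rw [Finset.card_image_of_injective _ Sum.inl_injective,
              Finset.card_image_of_injective _ Sum.inr_injective]
        _ = (A.image Sum.inl ∪ B.image Sum.inr).card :=
            (Finset.card_union_of_disjoint hdisj).symm
        _ ≤ C'.card := Finset.card_le_card hsub
        _ = m := hcard
    have hBlow : G.edgeFinset.card + S.card ≤ B.card := by
      set B' : Finset (Sym2 V × V) := B.filter (fun p => p.1 ∈ G.edgeFinset) with hB'
      have hfib : B'.card = ∑ e ∈ G.edgeFinset, (B'.filter (fun p => p.1 = e)).card :=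
        Finset.card_eq_sum_card_fiberwise (fun p hp => (Finset.mem_filter.1 hp).2)
      have hterm : ∀ e ∈ G.edgeFinset,
          (if e ∈ S then 2 else 1) ≤ (B'.filter (fun p => p.1 = e)).card := by
        intro e he
        induction e using Sym2.ind with
        | _ u v =>
          have hadj : G.Adj u v := SimpleGraph.mem_edgeFinset.1 he
          have he' : (s(u,v) : Sym2 V) ∈ G.edgeSet := hadj
          have hmid : (subdivTwice G).Adj (Sum.inr (s(u,v), u)) (Sum.inr (s(u,v), v)) :=
            Or.inr (Or.inr ⟨s(u,v), u, v, rfl, rfl, he',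
              Sym2.mem_mk_left u v, Sym2.mem_mk_right u v, hadj.ne⟩)
          have hmemB' : ∀ w, w ∈ (s(u,v) : Sym2 V) → Sum.inr ((s(u,v) : Sym2 V), w) ∈ C' →
              ((s(u,v) : Sym2 V), w) ∈ B'.filter (fun p => p.1 = s(u,v)) := by
            intro w hw hwC
            simp [hB', hB, he, hwC, hadj]
          by_cases heS : s(u,v) ∈ S
          · have hnu : Sum.inl u ∉ C' :=
              (Finset.mem_filter.1 heS).2 u (Sym2.mem_mk_left u v)
            have hnv : Sum.inl v ∉ C' :=
              (Finset.mem_filter.1 heS).2 v (Sym2.mem_mk_right u v)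
            have hu : Sum.inr ((s(u,v) : Sym2 V), u) ∈ C' := by
              have := hC' (Or.inl ⟨u, s(u,v), rfl, rfl, he', Sym2.mem_mk_left u v⟩ :
                (subdivTwice G).Adj (Sum.inl u) (Sum.inr (s(u,v), u)))
              rcases this with h1 | h1
              · exact absurd h1 hnu
              · exact h1
            have hv : Sum.inr ((s(u,v) : Sym2 V), v) ∈ C' := by
              have := hC' (Or.inl ⟨v, s(u,v), rfl, rfl, he', Sym2.mem_mk_right u v⟩ :
                (subdivTwice G).Adj (Sum.inl v) (Sum.inr (s(u,v), v)))
              rcases this with h1 | h1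
              · exact absurd h1 hnv
              · exact h1
            simp only [heS, if_pos]
            refine Finset.one_lt_card.2 ⟨_, hmemB' u (Sym2.mem_mk_left u v) hu,
              _, hmemB' v (Sym2.mem_mk_right u v) hv, ?_⟩
            simp [hadj.ne]
          · simp only [heS, if_neg, not_false_iff]
            rcases hC' hmid with h1 | h1
            · exact Finset.card_pos.2 ⟨_, hmemB' u (Sym2.mem_mk_left u v) h1⟩
            · exact Finset.card_pos.2 ⟨_, hmemB' v (Sym2.mem_mk_right u v) h1⟩
      calc G.edgeFinset.card + S.card
          = ∑ e ∈ G.edgeFinset, (if e ∈ S then 2 else 1) := by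
            have : ∀ e ∈ G.edgeFinset, (if e ∈ S then 2 else 1)
                = 1 + (if e ∈ S then 1 else 0) := by
              intro e _; split <;> rfl
            rw [Finset.sum_congr rfl this, Finset.sum_add_distrib,
              Finset.sum_const, smul_eq_mul, mul_one, Finset.sum_ite_mem,
              Finset.inter_eq_right.2 (Finset.filter_subset _ _), Finset.sum_const,
              smul_eq_mul, mul_one]
        _ ≤ ∑ e ∈ G.edgeFinset, (B'.filter (fun p => p.1 = e)).card :=
            Finset.sum_le_sum hterm
        _ = B'.card := hfib.symm
        _ ≤ B.card := Finset.card_le_card (Finset.filter_subset _ _)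
    have hCcard : C.card ≤ A.card + S.card :=
      le_trans (Finset.card_union_le _ _) (by gcongr; exact Finset.card_image_le)
    have : A.card + S.card + G.edgeFinset.card ≤ m := by omega
    omega
end

section
/- Let H be a bipartite-like graph with vertex classes U, R, Γ and edges only between U and R and between Γ and R. Define: a set S ⊆ Γ is a restricted distance-2-dominating set if every u ∈ U has a path of length exactly 2 in H to some γ ∈ S. Then a point u ∈ U is r-guarded by guard γ ∈ Γ (meaning some maximal rectangle ρ ∈ R contains u and intersects γ) if and only if there is a path of length 2 from u to γ in H. Consequently, the (U,Γ,P)-rGuarding problem has a solution of size k if and only if H has a restricted distance-2-dominating set of size k. -/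
open Set

/-- The minimal closed axis-aligned rectangle spanned by two points `g, p ∈ ℝ²`. -/
def spanRect (g p : ℝ × ℝ) : Set (ℝ × ℝ) :=
  Set.Icc (min g.1 p.1) (max g.1 p.1) ×ˢ Set.Icc (min g.2 p.2) (max g.2 p.2)

/-- `g` r-guards `p` relative to `P` iff the spanned rectangle lies inside `P`. -/
def RGuards (P : Set (ℝ × ℝ)) (g p : ℝ × ℝ) : Prop := spanRect g p ⊆ P

/-- `R` is a (closed) axis-aligned rectangle. -/
def IsRect (R : Set (ℝ × ℝ)) : Prop :=
  ∃ a b c d, R = Set.Icc a b ×ˢ Set.Icc c d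

/-- `ρ` is a maximal axis-aligned rectangle inside `P`. -/
def MaxRect (P ρ : Set (ℝ × ℝ)) : Prop :=
  IsRect ρ ∧ ρ ⊆ P ∧ ∀ ρ', IsRect ρ' → ρ ⊆ ρ' → ρ' ⊆ P → ρ' = ρ

/-- Guard `γ` (a subset of `P`) r-guards the point `u`. -/
def GuardsPt (P γ : Set (ℝ × ℝ)) (u : ℝ × ℝ) : Prop :=
  ∃ g ∈ γ, spanRect g u ⊆ P


lemma self_mem_spanRect (g p : ℝ × ℝ) : g ∈ spanRect g p ∧ p ∈ spanRect g p := by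
  constructor <;>
    exact ⟨⟨by simp [min_le_left, min_le_right], by simp [le_max_left, le_max_right]⟩,
      ⟨by simp [min_le_left, min_le_right], by simp [le_max_left, le_max_right]⟩⟩

lemma spanRect_subset {R : Set (ℝ × ℝ)} (hR : IsRect R) {g p : ℝ × ℝ}
    (hg : g ∈ R) (hp : p ∈ R) : spanRect g p ⊆ R := by
  obtain ⟨a, b, c, d, rfl⟩ := hR
  obtain ⟨⟨hg1, hg2⟩, hg3, hg4⟩ := hg
  obtain ⟨⟨hp1, hp2⟩, hp3, hp4⟩ := hp
  rintro ⟨x, y⟩ ⟨⟨hx1, hx2⟩, hy1, hy2⟩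
  exact ⟨⟨le_trans (le_min hg1 hp1) hx1, le_trans hx2 (max_le hg2 hp2)⟩,
    le_trans (le_min hg3 hp3) hy1, le_trans hy2 (max_le hg4 hp4)⟩

/-- In the auxiliary graph `H` on `U ∪ R ∪ Γ` (edges: `u–ρ` iff
`u ∈ ρ`, and `γ–ρ` iff `γ ∩ ρ ≠ ∅`, where `R` is the set of maximal rectangles
in `P`): a point `u ∈ U` is r-guarded by `γ ∈ Γ` iff there is a path of length 2
from `u` to `γ` in `H`; consequently, the `(U,Γ,P)`-rGuarding problem has a
solution of size `k` iff `H` has a restricted distance-2-dominating set of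
size `k`. -/
theorem rGuarding_iff_dist2dominating (P : Set (ℝ × ℝ))
    (U : Finset (ℝ × ℝ)) (Γ : Finset (Set (ℝ × ℝ)))
    (hU : ∀ u ∈ U, u ∈ P) (hΓ : ∀ γ ∈ Γ, γ ⊆ P)
    (hext : ∀ R, IsRect R → R ⊆ P → ∃ ρ, MaxRect P ρ ∧ R ⊆ ρ) :
    (∀ u ∈ U, ∀ γ ∈ Γ,
      (GuardsPt P γ u ↔ ∃ ρ, MaxRect P ρ ∧ u ∈ ρ ∧ (γ ∩ ρ).Nonempty)) ∧
    (∀ k : ℕ,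
      (∃ S ⊆ Γ, S.card = k ∧ ∀ u ∈ U, ∃ γ ∈ S, GuardsPt P γ u) ↔
      (∃ S ⊆ Γ, S.card = k ∧ ∀ u ∈ U, ∃ γ ∈ S,
        ∃ ρ, MaxRect P ρ ∧ u ∈ ρ ∧ (γ ∩ ρ).Nonempty)) := by
  have key : ∀ (γ : Set (ℝ × ℝ)) (u : ℝ × ℝ),
      GuardsPt P γ u ↔ ∃ ρ, MaxRect P ρ ∧ u ∈ ρ ∧ (γ ∩ ρ).Nonempty := by
    intro γ u
    constructor
    · rintro ⟨g, hg, hsub⟩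
      obtain ⟨ρ, hρ, hRρ⟩ := hext (spanRect g u) ⟨_, _, _, _, rfl⟩ hsub
      exact ⟨ρ, hρ, hRρ (self_mem_spanRect g u).2, g, hg, hRρ (self_mem_spanRect g u).1⟩
    · rintro ⟨ρ, ⟨hrect, hρP, _⟩, huρ, g, hgγ, hgρ⟩
      exact ⟨g, hgγ, (spanRect_subset hrect hgρ huρ).trans hρP⟩
  refine ⟨fun u _ γ _ => key γ u, fun k => ?_⟩
  constructor
  · rintro ⟨S, hS, hcard, hdom⟩
    exact ⟨S, hS, hcard, fun u hu => by
      obtain ⟨γ, hγ, h⟩ := hdom u hu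
      exact ⟨γ, hγ, (key γ u).mp h⟩⟩
  · rintro ⟨S, hS, hcard, hdom⟩
    exact ⟨S, hS, hcard, fun u hu => by
      obtain ⟨γ, hγ, h⟩ := hdom u hu
      exact ⟨γ, hγ, (key γ u).mpr h⟩⟩
end
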